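/- Let d be a nonsquare integer, D = diag(√d, -√d), and e₁, e₂ ∈ ℂ² vectors such that e₁, e₂, De₁, De₂ are linearly independent over ℝ. With M_{a,b} as above (diag(a,b) for d > 0; [[0,a+ib],[a-ib,0]] for d < 0) and E_{a,b} = Im(xᵀ M_{a,b} conj(y)), the ℝ-linear map λ: ℝ² → ℝ², (a,b) ↦ (E_{a,b}(e₁,e₂), E_{a,b}(e₁,De₂)) is bijective. -/

import Mathlib

open Matrix Complex

/-- `√d` as a complex number. -/
noncomputable def csqrt (d : ℝ) : ℂ :=
  if 0 ≤ d then (Real.sqrt d : ℂ) else Complex.I * (Real.sqrt (-d) : ℂ)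

/-- The matrix `M_{a,b}`: `diag(a,b)` for `d > 0`, `[[0,a+ib],[a-ib,0]]` for `d < 0`. -/
noncomputable def Mab (d : ℤ) (a b : ℝ) : Matrix (Fin 2) (Fin 2) ℂ :=
  if 0 < d then !![(a : ℂ), 0; 0, (b : ℂ)]
  else !![0, (a : ℂ) + b * Complex.I; (a : ℂ) - b * Complex.I, 0]

/-- `E_{a,b}(x,y) = Im (xᵀ M_{a,b} conj(y))`. -/
noncomputable def Eab (d : ℤ) (a b : ℝ) (x y : Fin 2 → ℂ) : ℝ :=
  (x ⬝ᵥ (Mab d a b).mulVec (star y)).im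

section aux

variable (d : ℤ) (a b : ℝ)

private lemma eab_antisym (x y : Fin 2 → ℂ) : Eab d a b y x = - Eab d a b x y := by
  by_cases hp : 0 < d <;>
  · simp only [Eab, Mab, hp, if_true, if_false, dotProduct, mulVec, Fin.sum_univ_two,
      Pi.star_apply, Complex.star_def, Matrix.cons_val', Matrix.cons_val_zero,
      Matrix.cons_val_one, Matrix.head_cons, Matrix.head_fin_const, Matrix.empty_val',
      Matrix.cons_val_fin_one]
    simp [Complex.add_im, Complex.mul_im, Complex.mul_re, Complex.conj_re, Complex.conj_im]
    ring

private lemma eab_self (x : Fin 2 → ℂ) : Eab d a b x x = 0 := by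
  have := eab_antisym d a b x x; linarith

private lemma eab_add_left (x x' y : Fin 2 → ℂ) :
    Eab d a b (x + x') y = Eab d a b x y + Eab d a b x' y := by
  by_cases hp : 0 < d <;>
  · simp only [Eab, Mab, hp, if_true, if_false, dotProduct, mulVec, Fin.sum_univ_two,
      Pi.star_apply, Pi.add_apply, Complex.star_def, Matrix.cons_val', Matrix.cons_val_zero,
      Matrix.cons_val_one, Matrix.head_cons, Matrix.head_fin_const, Matrix.empty_val',
      Matrix.cons_val_fin_one]
    simp [Complex.add_im, Complex.add_re, Complex.mul_im, Complex.mul_re,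
      Complex.conj_re, Complex.conj_im]
    ring

private lemma eab_smul_left (r : ℝ) (x y : Fin 2 → ℂ) :
    Eab d a b (r • x) y = r * Eab d a b x y := by
  by_cases hp : 0 < d <;>
  · simp only [Eab, Mab, hp, if_true, if_false, dotProduct, mulVec, Fin.sum_univ_two,
      Pi.star_apply, Pi.smul_apply, Complex.real_smul, Complex.star_def, Matrix.cons_val',
      Matrix.cons_val_zero, Matrix.cons_val_one, Matrix.head_cons, Matrix.head_fin_const,
      Matrix.empty_val', Matrix.cons_val_fin_one]
    simp [Complex.add_im, Complex.add_re, Complex.mul_im, Complex.mul_re,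
      Complex.conj_re, Complex.conj_im]
    ring

private lemma eab_add_right (x y y' : Fin 2 → ℂ) :
    Eab d a b x (y + y') = Eab d a b x y + Eab d a b x y' := by
  have h1 := eab_antisym d a b x (y + y')
  have h2 := eab_antisym d a b x y
  have h3 := eab_antisym d a b x y'
  have h4 := eab_add_left d a b y y' x
  linarith

private lemma eab_smul_right (r : ℝ) (x y : Fin 2 → ℂ) :
    Eab d a b x (r • y) = r * Eab d a b x y := by
  have h1 := eab_antisym d a b x (r • y)
  have h2 := eab_antisym d a b x y
  have h3 := eab_smul_left d a b r y x
  linear_combination h1 - h3 - r * h2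

private lemma eab_add_ab (a' b' : ℝ) (x y : Fin 2 → ℂ) :
    Eab d (a + a') (b + b') x y = Eab d a b x y + Eab d a' b' x y := by
  by_cases hp : 0 < d <;>
  · simp only [Eab, Mab, hp, if_true, if_false, dotProduct, mulVec, Fin.sum_univ_two,
      Pi.star_apply, Complex.star_def, Matrix.cons_val', Matrix.cons_val_zero,
      Matrix.cons_val_one, Matrix.head_cons, Matrix.head_fin_const, Matrix.empty_val',
      Matrix.cons_val_fin_one, Complex.ofReal_add]
    simp [Complex.add_im, Complex.add_re, Complex.mul_im, Complex.mul_re,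
      Complex.conj_re, Complex.conj_im]
    ring

private lemma eab_smul_ab (r : ℝ) (x y : Fin 2 → ℂ) :
    Eab d (r * a) (r * b) x y = r * Eab d a b x y := by
  by_cases hp : 0 < d <;>
  · simp only [Eab, Mab, hp, if_true, if_false, dotProduct, mulVec, Fin.sum_univ_two,
      Pi.star_apply, Complex.star_def, Matrix.cons_val', Matrix.cons_val_zero,
      Matrix.cons_val_one, Matrix.head_cons, Matrix.head_fin_const, Matrix.empty_val',
      Matrix.cons_val_fin_one, Complex.ofReal_mul]
    simp [Complex.add_im, Complex.add_re, Complex.mul_im, Complex.mul_re,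
      Complex.conj_re, Complex.conj_im]
    ring

variable (hdz : d ≠ 0) (D : Matrix (Fin 2) (Fin 2) ℂ)
    (hD : D = !![csqrt (d : ℝ), 0; 0, -csqrt (d : ℝ)])

include hdz hD

private lemma eab_self_D (x : Fin 2 → ℂ) : Eab d a b x (D.mulVec x) = 0 := by
  rcases hdz.lt_or_gt with hn | hp
  · have hdn : (d:ℝ) < 0 := by exact_mod_cast hn
    have h0 : ¬ (0:ℝ) ≤ (d:ℝ) := by linarith
    simp only [Eab, Mab, hD, csqrt, if_neg (by omega : ¬ 0 < d), if_neg h0, dotProduct, mulVec,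
      Fin.sum_univ_two, Pi.star_apply, Complex.star_def, Matrix.cons_val', Matrix.cons_val_zero,
      Matrix.cons_val_one, Matrix.head_cons, Matrix.head_fin_const, Matrix.empty_val',
      Matrix.cons_val_fin_one]
    simp [Complex.add_im, Complex.add_re, Complex.mul_im, Complex.mul_re,
      Complex.conj_re, Complex.conj_im]
    ring
  · have h0 : (0:ℝ) ≤ (d:ℝ) := by exact_mod_cast hp.le
    simp only [Eab, Mab, hD, csqrt, if_pos hp, if_pos h0, dotProduct, mulVec,
      Fin.sum_univ_two, Pi.star_apply, Complex.star_def, Matrix.cons_val', Matrix.cons_val_zero,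
      Matrix.cons_val_one, Matrix.head_cons, Matrix.head_fin_const, Matrix.empty_val',
      Matrix.cons_val_fin_one]
    simp [Complex.add_im, Complex.add_re, Complex.mul_im, Complex.mul_re,
      Complex.conj_re, Complex.conj_im]
    ring

private lemma eab_D_left (x y : Fin 2 → ℂ) :
    Eab d a b (D.mulVec x) y = Eab d a b x (D.mulVec y) := by
  rcases hdz.lt_or_gt with hn | hp
  · have hdn : (d:ℝ) < 0 := by exact_mod_cast hn
    have h0 : ¬ (0:ℝ) ≤ (d:ℝ) := by linarith
    simp only [Eab, Mab, hD, csqrt, if_neg (by omega : ¬ 0 < d), if_neg h0, dotProduct, mulVec,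
      Fin.sum_univ_two, Pi.star_apply, Complex.star_def, Matrix.cons_val', Matrix.cons_val_zero,
      Matrix.cons_val_one, Matrix.head_cons, Matrix.head_fin_const, Matrix.empty_val',
      Matrix.cons_val_fin_one]
    simp [Complex.add_im, Complex.add_re, Complex.mul_im, Complex.mul_re,
      Complex.conj_re, Complex.conj_im]
    ring
  · have h0 : (0:ℝ) ≤ (d:ℝ) := by exact_mod_cast hp.le
    simp only [Eab, Mab, hD, csqrt, if_pos hp, if_pos h0, dotProduct, mulVec,
      Fin.sum_univ_two, Pi.star_apply, Complex.star_def, Matrix.cons_val', Matrix.cons_val_zero,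
      Matrix.cons_val_one, Matrix.head_cons, Matrix.head_fin_const, Matrix.empty_val',
      Matrix.cons_val_fin_one]
    simp [Complex.add_im, Complex.add_re, Complex.mul_im, Complex.mul_re,
      Complex.conj_re, Complex.conj_im]
    ring

private lemma eab_D_D (x y : Fin 2 → ℂ) :
    Eab d a b (D.mulVec x) (D.mulVec y) = d * Eab d a b x y := by
  rcases hdz.lt_or_gt with hn | hp
  · have hdn : (d:ℝ) < 0 := by exact_mod_cast hn
    have h0 : ¬ (0:ℝ) ≤ (d:ℝ) := by linarith
    have hs : Real.sqrt (-(d:ℝ)) ^ 2 = -(d:ℝ) := Real.sq_sqrt (by linarith)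
    simp only [Eab, Mab, hD, csqrt, if_neg (by omega : ¬ 0 < d), if_neg h0, dotProduct, mulVec,
      Fin.sum_univ_two, Pi.star_apply, Complex.star_def, Matrix.cons_val', Matrix.cons_val_zero,
      Matrix.cons_val_one, Matrix.head_cons, Matrix.head_fin_const, Matrix.empty_val',
      Matrix.cons_val_fin_one]
    simp [Complex.add_im, Complex.add_re, Complex.mul_im, Complex.mul_re,
      Complex.conj_re, Complex.conj_im]
    ring_nf
    rw [hs]; ring
  · have h0 : (0:ℝ) ≤ (d:ℝ) := by exact_mod_cast hp.le
    have hs : Real.sqrt ((d:ℝ)) ^ 2 = (d:ℝ) := Real.sq_sqrt h0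
    simp only [Eab, Mab, hD, csqrt, if_pos hp, if_pos h0, dotProduct, mulVec,
      Fin.sum_univ_two, Pi.star_apply, Complex.star_def, Matrix.cons_val', Matrix.cons_val_zero,
      Matrix.cons_val_one, Matrix.head_cons, Matrix.head_fin_const, Matrix.empty_val',
      Matrix.cons_val_fin_one]
    simp [Complex.add_im, Complex.add_re, Complex.mul_im, Complex.mul_re,
      Complex.conj_re, Complex.conj_im]
    ring_nf
    rw [hs]; ring

end aux

set_option maxHeartbeats 1000000 in
/-- if `e₁, e₂, De₁, De₂` are ℝ-linearly independent then the
ℝ-linear map `(a,b) ↦ (E_{a,b}(e₁,e₂), E_{a,b}(e₁,De₂))` is bijective. -/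
theorem stmt_9 (d : ℤ) (hd : ¬ ∃ n : ℤ, n ^ 2 = d)
    (D : Matrix (Fin 2) (Fin 2) ℂ)
    (hD : D = !![csqrt (d : ℝ), 0; 0, -csqrt (d : ℝ)])
    (e₁ e₂ : Fin 2 → ℂ)
    (hli : LinearIndependent ℝ ![e₁, e₂, D.mulVec e₁, D.mulVec e₂]) :
    Function.Bijective (fun p : ℝ × ℝ =>
      (Eab d p.1 p.2 e₁ e₂, Eab d p.1 p.2 e₁ (D.mulVec e₂))) := by
  have hdz : d ≠ 0 := by rintro rfl; exact hd ⟨0, by ring⟩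
  let L : (ℝ × ℝ) →ₗ[ℝ] (ℝ × ℝ) :=
    { toFun := fun p => (Eab d p.1 p.2 e₁ e₂, Eab d p.1 p.2 e₁ (D.mulVec e₂))
      map_add' := fun p q => by
        ext
        · exact eab_add_ab d p.1 p.2 q.1 q.2 e₁ e₂
        · exact eab_add_ab d p.1 p.2 q.1 q.2 e₁ (D.mulVec e₂)
      map_smul' := fun r p => by
        ext
        · exact eab_smul_ab d p.1 p.2 r e₁ e₂
        · exact eab_smul_ab d p.1 p.2 r e₁ (D.mulVec e₂) }
  show Function.Bijective ⇑L
  suffices hinj : Function.Injective ⇑L from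
    ⟨hinj, (LinearMap.injective_iff_surjective).mp hinj⟩
  rw [injective_iff_map_eq_zero]
  rintro ⟨a, b⟩ hp0
  have hu : Eab d a b e₁ e₂ = 0 := congrArg Prod.fst hp0
  have hv : Eab d a b e₁ (D.mulVec e₂) = 0 := congrArg Prod.snd hp0
  -- the form as a bilinear map
  let B : (Fin 2 → ℂ) →ₗ[ℝ] (Fin 2 → ℂ) →ₗ[ℝ] ℝ :=
    LinearMap.mk₂ ℝ (Eab d a b) (eab_add_left d a b) (eab_smul_left d a b)
      (eab_add_right d a b) (eab_smul_right d a b)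
  have hr4 : Fintype.card (Fin 4) = Module.finrank ℝ (Fin 2 → ℂ) := by
    simp [Module.finrank_pi_fintype]
  let v := basisOfLinearIndependentOfCardEqFinrank hli hr4
  have hv' : ⇑v = ![e₁, e₂, D.mulVec e₁, D.mulVec e₂] :=
    coe_basisOfLinearIndependentOfCardEqFinrank hli hr4
  have hvfun : ∀ i : Fin 4, v i = ![e₁, e₂, D.mulVec e₁, D.mulVec e₂] i :=
    fun i => congrFun hv' i
  have hB : B = 0 := by
    apply LinearMap.ext_basis v v
    intro i j
    rw [hvfun i, hvfun j]
    have h01 : Eab d a b e₂ e₁ = 0 := by rw [eab_antisym]; simp [hu]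
    have hvD : Eab d a b (D.mulVec e₁) e₂ = 0 := by
      rw [eab_D_left d a b hdz D hD]; exact hv
    have hvD' : Eab d a b e₂ (D.mulVec e₁) = 0 := by
      rw [eab_antisym, hvD]; simp
    have h1D : Eab d a b (D.mulVec e₂) e₁ = 0 := by
      rw [eab_antisym, hv]; simp
    have hself1 : Eab d a b e₁ (D.mulVec e₁) = 0 := eab_self_D d a b hdz D hD e₁
    have hself2 : Eab d a b e₂ (D.mulVec e₂) = 0 := eab_self_D d a b hdz D hD e₂
    have hself1' : Eab d a b (D.mulVec e₁) e₁ = 0 := by rw [eab_antisym, hself1]; simp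
    have hself2' : Eab d a b (D.mulVec e₂) e₂ = 0 := by rw [eab_antisym, hself2]; simp
    have hDD : Eab d a b (D.mulVec e₁) (D.mulVec e₂) = 0 := by
      rw [eab_D_D d a b hdz D hD]; simp [hu]
    have hDD' : Eab d a b (D.mulVec e₂) (D.mulVec e₁) = 0 := by
      rw [eab_antisym, hDD]; simp
    have hd0 : Eab d a b e₁ e₁ = 0 := eab_self d a b e₁
    have hd1 : Eab d a b e₂ e₂ = 0 := eab_self d a b e₂
    have hd2 : Eab d a b (D.mulVec e₁) (D.mulVec e₁) = 0 := eab_self d a b _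
    have hd3 : Eab d a b (D.mulVec e₂) (D.mulVec e₂) = 0 := eab_self d a b _
    have hBapp : ∀ x y : Fin 2 → ℂ, B x y = Eab d a b x y := fun x y => rfl
    fin_cases i <;> fin_cases j <;>
      simp only [Matrix.cons_val_zero, Matrix.cons_val_one, Matrix.head_cons,
        Matrix.cons_val_two, Matrix.tail_cons, Matrix.cons_val_three, Fin.isValue,
        LinearMap.zero_apply, hBapp] <;>
      assumption
  have hE : ∀ x y : Fin 2 → ℂ, Eab d a b x y = 0 := by
    intro x y
    have := LinearMap.congr_fun (LinearMap.congr_fun hB x) y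
    simpa [B] using this
  -- now extract a = 0 and b = 0
  have hab : a = 0 ∧ b = 0 := by
    rcases hdz.lt_or_gt with hn | hp
    · have h1 := hE ![1, 0] ![0, 1]
      have h2 := hE ![1, 0] ![0, Complex.I]
      constructor
      · simpa [Eab, Mab, if_neg (by omega : ¬ 0 < d), dotProduct, mulVec, Fin.sum_univ_two,
          Complex.add_im, Complex.mul_im, Complex.mul_re] using h2
      · simpa [Eab, Mab, if_neg (by omega : ¬ 0 < d), dotProduct, mulVec, Fin.sum_univ_two,
          Complex.add_im, Complex.mul_im, Complex.mul_re] using h1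
    · have h1 := hE ![1, 0] ![Complex.I, 0]
      have h2 := hE ![0, 1] ![0, Complex.I]
      constructor
      · simpa [Eab, Mab, if_pos hp, dotProduct, mulVec, Fin.sum_univ_two,
          Complex.add_im, Complex.mul_im, Complex.mul_re] using h1
      · simpa [Eab, Mab, if_pos hp, dotProduct, mulVec, Fin.sum_univ_two,
          Complex.add_im, Complex.mul_im, Complex.mul_re] using h2
  simp [Prod.ext_iff, hab.1, hab.2]
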